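/- (Main Theorem: Stanley–Féray–Śniady formula for generalized characters) Let λ ⊢ n, μ ⊢ n-1 with λ → μ, fix a λ-tableau t with 1 in the box λ\μ, let 2 ≤ l ≤ n and θ ∈ S_l. Then φ_{λ,μ}(θ) = (1/(n-1)_{l-1}) Σ_{γ,σ∈S_l : γσ=θ} sign(γ) N^{λ,μ}(γ,σ), where φ_{λ,μ} = (1/(n-1)!) Σ_{π∈S̃_{n-1}} π E_t π^{-1} and (n-1)_{l-1} = (n-1)(n-2)⋯(n-l+1) is the falling factorial. -/

import Mathlib

open scoped Classical

/-- `γ` belongs to the column stabilizer `C_t` of the tableau `t : Fin n ≃ lam.cells`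
(the entries `1,…,n` are encoded as `0,…,n-1 : Fin n`; a cell `(i, j)` lies in row `i` and
column `j`). -/
def InColStab {n : ℕ} (lam : YoungDiagram) (t : Fin n ≃ lam.cells)
    (γ : Equiv.Perm (Fin n)) : Prop :=
  ∀ m : Fin n, ((t (γ m)) : ℕ × ℕ).2 = ((t m) : ℕ × ℕ).2

/-- `σ` belongs to the row stabilizer `R_t` of the tableau `t : Fin n ≃ lam.cells`. -/
def InRowStab {n : ℕ} (lam : YoungDiagram) (t : Fin n ≃ lam.cells)
    (σ : Equiv.Perm (Fin n)) : Prop :=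
  ∀ m : Fin n, ((t (σ m)) : ℕ × ℕ).1 = ((t m) : ℕ × ℕ).1

open scoped Classical in
/-- The Young symmetrizer `E_t = ∑_{γ ∈ C_t} ∑_{σ ∈ R_t} sign(γ) γσ ∈ ℂ[S_n]`. -/
noncomputable def youngSym {n : ℕ} (lam : YoungDiagram) (t : Fin n ≃ lam.cells) :
    MonoidAlgebra ℂ (Equiv.Perm (Fin n)) :=
  ∑ γ : Equiv.Perm (Fin n), ∑ σ : Equiv.Perm (Fin n),
    if InColStab lam t γ ∧ InRowStab lam t σ then
      MonoidAlgebra.single (γ * σ) ((Equiv.Perm.sign γ : ℤ) : ℂ)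
    else 0

open scoped Classical in
/-- The generalized character `φ_{λ,μ} = (1/(n-1)!) ∑_{π ∈ S̃_{n-1}} π E_t π⁻¹ ∈ ℂ[S_n]`, where
`S̃_{n-1}` is the stabilizer of the point `1` (encoded as `0 : Fin n`), viewed as an element of
the group algebra, i.e. as a function on `S_n`. -/
noncomputable def genChar {n : ℕ} (lam : YoungDiagram) (t : Fin n ≃ lam.cells) :
    MonoidAlgebra ℂ (Equiv.Perm (Fin n)) :=
  ((n - 1).factorial : ℂ)⁻¹ •
    ∑ π : Equiv.Perm (Fin n),
      if ∀ i : Fin n, (i : ℕ) = 0 → π i = i then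
        MonoidAlgebra.of ℂ (Equiv.Perm (Fin n)) π * youngSym lam t *
          MonoidAlgebra.of ℂ (Equiv.Perm (Fin n)) π⁻¹
      else 0

/-- `N^{λ,μ}(γ,σ)`: the number of colorings `h : C(γ) ⊔ C(σ) → ℕ` of the cycles of
`γ, σ ∈ S_l` (as permutations of `{1,…,l}`) such that the color of each cycle of `γ` is a column
of `λ`, the color of each cycle of `σ` is a row of `λ`, the cycles of `γ` and of `σ` containing
`1` receive the colors `c(λ∖μ)` and `r(λ∖μ)` respectively, and whenever a cycle `c₁` of `γ` meets
a cycle `c₂` of `σ`, the pair `(h c₁, h c₂)` gives the (column, row) coordinates of a box of `λ`.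
A coloring is encoded as the pair `ab` of functions `{1,…,l} → ℕ` that are constant on the cycles
of `γ` (resp. of `σ`), assigning to each point the color of its cycle. -/
noncomputable def Ncol {n : ℕ} (lam : YoungDiagram) (box : lam.cells)
    (l : ℕ) (hl : l ≤ n) (γ σ : Equiv.Perm (Fin n)) : ℕ :=
  Nat.card {ab : (Fin l → ℕ) × (Fin l → ℕ) //
    (∀ x y : Fin l, γ.SameCycle (Fin.castLE hl x) (Fin.castLE hl y) → ab.1 x = ab.1 y) ∧
    (∀ x y : Fin l, σ.SameCycle (Fin.castLE hl x) (Fin.castLE hl y) → ab.2 x = ab.2 y) ∧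
    (∀ x : Fin l, ∃ i : ℕ, (i, ab.1 x) ∈ lam) ∧
    (∀ x : Fin l, ∃ j : ℕ, (ab.2 x, j) ∈ lam) ∧
    (∀ x : Fin l, (x : ℕ) = 0 → ab.1 x = ((box : ℕ × ℕ)).2) ∧
    (∀ x : Fin l, (x : ℕ) = 0 → ab.2 x = ((box : ℕ × ℕ)).1) ∧
    (∀ x : Fin l, ((ab.2 x, ab.1 x) : ℕ × ℕ) ∈ lam)}


set_option maxHeartbeats 1600000


theorem const_on_sameCycle {α τ : Type*} {g : Equiv.Perm α} {F : α → τ}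
    (h : ∀ m, F (g m) = F m) : ∀ {x y : α}, g.SameCycle x y → F x = F y := by
  have key : ∀ (i : ℤ) (x : α), F ((g ^ i) x) = F x := by
    intro i
    induction i using Int.induction_on with
    | zero => intro x; simp
    | succ k ih =>
      intro x
      have h2 : (g ^ ((k : ℤ) + 1)) x = g ((g ^ (k : ℤ)) x) := by
        rw [add_comm, zpow_add, zpow_one]; rfl
      rw [h2, h, ih]
    | pred k ih =>
      intro x
      have h2 : (g ^ (1 + (-(k : ℤ) - 1))) x = g ((g ^ (-(k : ℤ) - 1)) x) := by
        rw [zpow_add, zpow_one]; rfl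
      have h3 := ih x
      have h4 : (-(k : ℤ)) = 1 + (-(k : ℤ) - 1) := by ring
      rw [h4, h2, h] at h3
      show F ((g ^ (-(k : ℤ) - 1)) x) = F x
      exact h3
  rintro x y ⟨i, rfl⟩
  exact (key i x).symm

lemma card_big {n l : ℕ} (hln : l ≤ n) :
    Fintype.card {m : Fin n // ¬ ((m : ℕ) < l)} = n - l := by
  have e : {m : Fin n // ¬ ((m : ℕ) < l)} ≃ Fin (n - l) :=
    { toFun := fun m => ⟨(m.1 : ℕ) - l, by have := m.2; have := m.1.2; omega⟩
      invFun := fun j => ⟨⟨(j : ℕ) + l, by have := j.2; omega⟩, by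
        simp only [not_lt]; omega⟩
      left_inv := fun m => by
        have hm := m.2
        simp only [not_lt] at hm
        apply Subtype.ext; apply Fin.ext
        simp only []
        omega
      right_inv := fun j => by
        apply Fin.ext
        simp only []
        omega }
  rw [Fintype.card_congr e, Fintype.card_fin]

lemma card_perm_extending {n l : ℕ} (hln : l ≤ n) (g : Fin l → Fin n)
    (hg : Function.Injective g) :
    (Finset.univ.filter
      (fun ρ : Equiv.Perm (Fin n) => ∀ x : Fin l, ρ (Fin.castLE hln x) = g x)).card
      = (n - l).factorial := by
  classical
  set c : Fin l → Fin n := Fin.castLE hln with hc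
  have hcinj : Function.Injective c := Fin.castLE_injective hln
  have hcards : Fintype.card ↥(Set.range c)ᶜ = Fintype.card ↥(Set.range g)ᶜ := by
    rw [Fintype.card_compl_set, Fintype.card_compl_set,
      Set.card_range_of_injective hcinj, Set.card_range_of_injective hg]
  let ρ₀ : Equiv.Perm (Fin n) :=
    (Equiv.Set.sumCompl (Set.range c)).symm.trans
      ((Equiv.sumCongr ((Equiv.ofInjective c hcinj).symm.trans (Equiv.ofInjective g hg))
        (Fintype.equivOfCardEq hcards)).trans (Equiv.Set.sumCompl (Set.range g)))
  have hρ₀ : ∀ x : Fin l, ρ₀ (c x) = g x := by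
    intro x
    have h1 : (Equiv.Set.sumCompl (Set.range c)).symm (c x) =
        Sum.inl ⟨c x, Set.mem_range_self x⟩ :=
      Equiv.Set.sumCompl_symm_apply_of_mem (Set.mem_range_self x)
    show ((Equiv.Set.sumCompl (Set.range g)))
        ((Equiv.sumCongr _ _) ((Equiv.Set.sumCompl (Set.range c)).symm (c x))) = g x
    rw [h1]
    simp only [Equiv.sumCongr_apply, Sum.map_inl, Equiv.trans_apply]
    rw [Equiv.ofInjective_symm_apply hcinj x]
    simp [Equiv.ofInjective_apply]
  have hbij : (Finset.univ.filter
      (fun ρ : Equiv.Perm (Fin n) => ∀ x : Fin l, ρ (c x) = g x)).card =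
      (Finset.univ.filter
      (fun h : Equiv.Perm (Fin n) => ∀ x : Fin l, h (c x) = c x)).card := by
    apply Finset.card_bij (fun ρ _ => ρ₀⁻¹ * ρ)
    · intro ρ hρ
      simp only [Finset.mem_filter, Finset.mem_univ, true_and] at hρ ⊢
      intro x
      rw [Equiv.Perm.mul_apply, hρ x, ← hρ₀ x]
      simp
    · intro a ha b hb hab
      exact mul_left_cancel hab
    · intro h hh
      simp only [Finset.mem_filter, Finset.mem_univ, true_and] at hh
      refine ⟨ρ₀ * h, ?_, ?_⟩
      · simp only [Finset.mem_filter, Finset.mem_univ, true_and]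
        intro x
        rw [Equiv.Perm.mul_apply, hh x, hρ₀ x]
      · rw [← mul_assoc]; simp
  rw [hbij]
  have hcard2 : (Finset.univ.filter
      (fun h : Equiv.Perm (Fin n) => ∀ x : Fin l, h (c x) = c x)).card =
      Fintype.card {f : Equiv.Perm (Fin n) // ∀ m : Fin n, ((m : ℕ) < l) → f m = m} := by
    rw [Fintype.card_subtype]
    apply Finset.card_bij (fun a _ => a)
    · intro a ha
      simp only [Finset.mem_filter, Finset.mem_univ, true_and] at ha ⊢
      intro m hm
      have hmc : m = c ⟨(m : ℕ), hm⟩ := by apply Fin.ext; simp [hc]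
      rw [hmc, ha]
    · intro a ha b hb hab; exact hab
    · intro b hb
      simp only [Finset.mem_filter, Finset.mem_univ, true_and] at hb
      refine ⟨b, ?_, rfl⟩
      simp only [Finset.mem_filter, Finset.mem_univ, true_and]
      intro x
      exact hb (c x) (by simp [hc])
  rw [hcard2]
  have e3 : Equiv.Perm {m : Fin n // ¬ ((m : ℕ) < l)} ≃
      {f : Equiv.Perm (Fin n) // ∀ a : Fin n, ¬ ¬ ((a : ℕ) < l) → f a = a} :=
    Equiv.Perm.subtypeEquivSubtypePerm _
  have e4 : {f : Equiv.Perm (Fin n) // ∀ a : Fin n, ¬ ¬ ((a : ℕ) < l) → f a = a} ≃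
      {f : Equiv.Perm (Fin n) // ∀ m : Fin n, ((m : ℕ) < l) → f m = m} := by
    apply Equiv.subtypeEquivRight
    intro f
    constructor
    · intro hf m hm; exact hf m (not_not.mpr hm)
    · intro hf m hm; exact hf m (not_not.mp hm)
  rw [Fintype.card_congr (e4.symm.trans e3.symm), Fintype.card_perm, card_big hln]


def Pbeta {n l : ℕ} (lam : YoungDiagram) (box : lam.cells) (hln : l ≤ n)
    (γ σ : Equiv.Perm (Fin n)) (β : Fin l → lam.cells) : Prop :=
  (∀ x y : Fin l, γ.SameCycle (Fin.castLE hln x) (Fin.castLE hln y) →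
      ((β x : ℕ × ℕ)).2 = ((β y : ℕ × ℕ)).2) ∧
  (∀ x y : Fin l, σ.SameCycle (Fin.castLE hln x) (Fin.castLE hln y) →
      ((β x : ℕ × ℕ)).1 = ((β y : ℕ × ℕ)).1) ∧
  (∀ x : Fin l, (x : ℕ) = 0 → β x = box)

lemma Ncol_eq_card {n l : ℕ} (lam : YoungDiagram) (box : lam.cells) (hln : l ≤ n)
    (γ σ : Equiv.Perm (Fin n)) :
    Ncol lam box l hln γ σ =
      (Finset.univ.filter (fun β : Fin l → lam.cells =>
        Pbeta lam box hln γ σ β)).card := by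
  classical
  have E : {ab : (Fin l → ℕ) × (Fin l → ℕ) //
    (∀ x y : Fin l, γ.SameCycle (Fin.castLE hln x) (Fin.castLE hln y) → ab.1 x = ab.1 y) ∧
    (∀ x y : Fin l, σ.SameCycle (Fin.castLE hln x) (Fin.castLE hln y) → ab.2 x = ab.2 y) ∧
    (∀ x : Fin l, ∃ i : ℕ, (i, ab.1 x) ∈ lam) ∧
    (∀ x : Fin l, ∃ j : ℕ, (ab.2 x, j) ∈ lam) ∧
    (∀ x : Fin l, (x : ℕ) = 0 → ab.1 x = ((box : ℕ × ℕ)).2) ∧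
    (∀ x : Fin l, (x : ℕ) = 0 → ab.2 x = ((box : ℕ × ℕ)).1) ∧
    (∀ x : Fin l, ((ab.2 x, ab.1 x) : ℕ × ℕ) ∈ lam)} ≃
      {β : Fin l → lam.cells // Pbeta lam box hln γ σ β} := by
    refine
      { toFun := fun p =>
          ⟨fun x => ⟨(p.1.2 x, p.1.1 x), (YoungDiagram.mem_cells _).mpr (p.2.2.2.2.2.2.2 x)⟩, ?_, ?_, ?_⟩
        invFun := fun q =>
          ⟨(fun x => ((q.1 x : ℕ × ℕ)).2, fun x => ((q.1 x : ℕ × ℕ)).1), ?_, ?_, ?_, ?_, ?_, ?_, ?_⟩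
        left_inv := ?_
        right_inv := ?_ }
    · intro x y h; exact p.2.1 x y h
    · intro x y h; exact p.2.2.1 x y h
    · intro x hx
      apply Subtype.ext
      have h5 := p.2.2.2.2.2.1 x hx
      have h6 := p.2.2.2.2.2.2.1 x hx
      exact Prod.ext h6 h5
    · intro x y h; exact q.2.1 x y h
    · intro x y h; exact q.2.2.1 x y h
    · intro x
      refine ⟨((q.1 x : ℕ × ℕ)).1, ?_⟩
      have := (YoungDiagram.mem_cells _).mp (q.1 x).2
      simpa using this
    · intro x
      refine ⟨((q.1 x : ℕ × ℕ)).2, ?_⟩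
      have := (YoungDiagram.mem_cells _).mp (q.1 x).2
      simpa using this
    · intro x hx
      show ((q.1 x : ℕ × ℕ)).2 = ((box : ℕ × ℕ)).2
      rw [q.2.2.2 x hx]
    · intro x hx
      show ((q.1 x : ℕ × ℕ)).1 = ((box : ℕ × ℕ)).1
      rw [q.2.2.2 x hx]
    · intro x
      have := (YoungDiagram.mem_cells _).mp (q.1 x).2
      simpa using this
    · intro p
      apply Subtype.ext
      rfl
    · intro q
      apply Subtype.ext
      funext x
      apply Subtype.ext
      rfl
  rw [Ncol, Nat.card_congr E, Nat.card_eq_fintype_card, Fintype.card_subtype]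

lemma Kcard {n l : ℕ} (lam : YoungDiagram) (box : lam.cells) (hln : l ≤ n) (hl0 : 0 < l)
    (t : Fin n ≃ lam.cells) (ht : ∀ i : Fin n, (i : ℕ) = 0 → t i = box)
    (γ σ : Equiv.Perm (Fin n))
    (hγ : ∀ i : Fin n, l ≤ (i : ℕ) → γ i = i) (hσ : ∀ i : Fin n, l ≤ (i : ℕ) → σ i = i) :
    (Finset.univ.filter (fun π : Equiv.Perm (Fin n) =>
        (∀ i : Fin n, (i : ℕ) = 0 → π i = i) ∧
        InColStab lam t (π⁻¹ * γ * π) ∧ InRowStab lam t (π⁻¹ * σ * π))).card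
      = (Finset.univ.filter (fun β : Fin l → lam.cells =>
          Pbeta lam box hln γ σ β ∧ Function.Injective β)).card * (n - l).factorial := by
  classical
  set c : Fin l → Fin n := Fin.castLE hln with hc
  set Ψ : Equiv.Perm (Fin n) → (Fin l → lam.cells) := fun π x => t (π⁻¹ (c x)) with hΨ
  -- small points are mapped to small points by γ and σ
  have hsmall : ∀ (τ : Equiv.Perm (Fin n)), (∀ i : Fin n, l ≤ (i : ℕ) → τ i = i) →
      ∀ k : Fin n, (k : ℕ) < l → ((τ k : Fin n) : ℕ) < l := by
    intro τ hτ k hk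
    by_contra hb
    push_neg at hb
    have h1 := hτ (τ k) hb
    have h2 := τ.injective h1
    rw [h2] at hb
    omega
  have step1 : ∀ π ∈ Finset.univ.filter (fun π : Equiv.Perm (Fin n) =>
        (∀ i : Fin n, (i : ℕ) = 0 → π i = i) ∧
        InColStab lam t (π⁻¹ * γ * π) ∧ InRowStab lam t (π⁻¹ * σ * π)),
      Ψ π ∈ Finset.univ.filter (fun β : Fin l → lam.cells =>
          Pbeta lam box hln γ σ β ∧ Function.Injective β) := by
    intro π hπ
    simp only [Finset.mem_filter, Finset.mem_univ, true_and] at hπ ⊢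
    obtain ⟨hπ0, hcol, hrow⟩ := hπ
    have hcolinv : ∀ m : Fin n, ((t (π⁻¹ (γ m)) : ℕ × ℕ)).2 = ((t (π⁻¹ m) : ℕ × ℕ)).2 := by
      intro m
      have := hcol (π⁻¹ m)
      simpa [Equiv.Perm.mul_apply] using this
    have hrowinv : ∀ m : Fin n, ((t (π⁻¹ (σ m)) : ℕ × ℕ)).1 = ((t (π⁻¹ m) : ℕ × ℕ)).1 := by
      intro m
      have := hrow (π⁻¹ m)
      simpa [Equiv.Perm.mul_apply] using this
    refine ⟨⟨?_, ?_, ?_⟩, ?_⟩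
    · intro x y hxy
      exact const_on_sameCycle (F := fun m : Fin n => ((t (π⁻¹ m) : ℕ × ℕ)).2) hcolinv hxy
    · intro x y hxy
      exact const_on_sameCycle (F := fun m : Fin n => ((t (π⁻¹ m) : ℕ × ℕ)).1) hrowinv hxy
    · intro x hx
      have hcx : ((c x : Fin n) : ℕ) = 0 := by simp [hc, hx]
      have h1 : π (c x) = c x := hπ0 (c x) hcx
      have h2 : π⁻¹ (c x) = c x := by
        conv_lhs => rw [← h1]
        exact π.symm_apply_apply (c x)
      show t (π⁻¹ (c x)) = box
      rw [h2]
      exact ht (c x) hcx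
    · intro x y hxy
      have h1 : t (π⁻¹ (c x)) = t (π⁻¹ (c y)) := hxy
      have h2 : c x = c y := π⁻¹.injective (t.injective h1)
      exact Fin.castLE_injective hln h2
  rw [Finset.card_eq_sum_card_fiberwise step1]
  rw [Finset.sum_congr rfl (fun β hβ => ?_), Finset.sum_const, smul_eq_mul]
  -- fiber over β has cardinality (n-l)!
  simp only [Finset.mem_filter, Finset.mem_univ, true_and] at hβ
  obtain ⟨⟨hP1, hP2, hP3⟩, hβinj⟩ := hβ
  set g : Fin l → Fin n := fun x => t.symm (β x) with hg
  have hginj : Function.Injective g := fun a b hab => hβinj (t.symm.injective hab)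
  have hfib : (Finset.univ.filter (fun π : Equiv.Perm (Fin n) =>
        (∀ i : Fin n, (i : ℕ) = 0 → π i = i) ∧
        InColStab lam t (π⁻¹ * γ * π) ∧ InRowStab lam t (π⁻¹ * σ * π))).filter
          (fun π => Ψ π = β) =
      Finset.univ.filter (fun π : Equiv.Perm (Fin n) => ∀ x : Fin l, π⁻¹ (c x) = g x) := by
    ext π
    simp only [Finset.mem_filter, Finset.mem_univ, true_and]
    constructor
    · rintro ⟨-, hΨβ⟩
      intro x
      have h1 : t (π⁻¹ (c x)) = β x := congrFun hΨβ x
      show π⁻¹ (c x) = t.symm (β x)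
      rw [← h1, Equiv.symm_apply_apply]
    · intro hagree
      have hΨβ : Ψ π = β := by
        funext x
        show t (π⁻¹ (c x)) = β x
        rw [hagree x, hg, Equiv.apply_symm_apply]
      have hx0 : ∀ i : Fin n, (i : ℕ) = 0 → π i = i := by
        intro i hi
        have hiel : (i : ℕ) < l := by omega
        set x0 : Fin l := ⟨(i : ℕ), hiel⟩ with hx0def
        have hic : i = c x0 := by apply Fin.ext; simp [hc, hx0def]
        have hbox : β x0 = box := hP3 x0 hi
        have htc : t (c x0) = box := ht (c x0) (by simp [hc, hx0def, hi])
        have h1 : π⁻¹ (c x0) = c x0 := by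
          rw [hagree x0]
          show t.symm (β x0) = c x0
          rw [hbox, ← htc, Equiv.symm_apply_apply]
        rw [hic]
        conv_lhs => rw [← h1]
        exact (π.apply_symm_apply (c x0))
      refine ⟨⟨hx0, ?_, ?_⟩, hΨβ⟩
      · -- InColStab
        intro m
        show ((t ((π⁻¹ * γ * π) m) : ℕ × ℕ)).2 = ((t m : ℕ × ℕ)).2
        have hm : (π⁻¹ * γ * π) m = π⁻¹ (γ (π m)) := by
          simp [Equiv.Perm.mul_apply]
        rw [hm]
        set k : Fin n := π m with hk
        have hmk : m = π⁻¹ k := by rw [hk]; exact (π.symm_apply_apply m).symm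
        rw [hmk]
        by_cases hkl : (k : ℕ) < l
        · set x : Fin l := ⟨(k : ℕ), hkl⟩ with hxdef
          have hkc : k = c x := by apply Fin.ext; simp [hc, hxdef]
          have hγkl : ((γ k : Fin n) : ℕ) < l := hsmall γ hγ k hkl
          set x' : Fin l := ⟨((γ k : Fin n) : ℕ), hγkl⟩ with hx'def
          have hγkc : γ k = c x' := by apply Fin.ext; simp [hc, hx'def]
          have hβx : t (π⁻¹ (c x)) = β x := by
            rw [hagree x]; exact t.apply_symm_apply (β x)
          have hβx' : t (π⁻¹ (c x')) = β x' := by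
            rw [hagree x']; exact t.apply_symm_apply (β x')
          rw [hγkc, hβx']
          rw [hkc, hβx]
          have hscc : γ.SameCycle (c x) (c x') := by
            refine ⟨1, ?_⟩
            simp [← hkc, ← hγkc]
          exact (hP1 x x' hscc).symm
        · have : γ k = k := hγ k (by omega)
          rw [this]
      · -- InRowStab
        intro m
        show ((t ((π⁻¹ * σ * π) m) : ℕ × ℕ)).1 = ((t m : ℕ × ℕ)).1
        have hm : (π⁻¹ * σ * π) m = π⁻¹ (σ (π m)) := by
          simp [Equiv.Perm.mul_apply]
        rw [hm]
        set k : Fin n := π m with hk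
        have hmk : m = π⁻¹ k := by rw [hk]; exact (π.symm_apply_apply m).symm
        rw [hmk]
        by_cases hkl : (k : ℕ) < l
        · set x : Fin l := ⟨(k : ℕ), hkl⟩ with hxdef
          have hkc : k = c x := by apply Fin.ext; simp [hc, hxdef]
          have hσkl : ((σ k : Fin n) : ℕ) < l := hsmall σ hσ k hkl
          set x' : Fin l := ⟨((σ k : Fin n) : ℕ), hσkl⟩ with hx'def
          have hσkc : σ k = c x' := by apply Fin.ext; simp [hc, hx'def]
          have hβx : t (π⁻¹ (c x)) = β x := by
            rw [hagree x]; exact t.apply_symm_apply (β x)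
          have hβx' : t (π⁻¹ (c x')) = β x' := by
            rw [hagree x']; exact t.apply_symm_apply (β x')
          rw [hσkc, hβx']
          rw [hkc, hβx]
          have hscc : σ.SameCycle (c x) (c x') := by
            refine ⟨1, ?_⟩
            simp [← hkc, ← hσkc]
          exact (hP2 x x' hscc).symm
        · have : σ k = k := hσ k (by omega)
          rw [this]
  rw [hfib]
  have hrev : (Finset.univ.filter
      (fun π : Equiv.Perm (Fin n) => ∀ x : Fin l, π⁻¹ (c x) = g x)).card =
      (Finset.univ.filter
      (fun ρ : Equiv.Perm (Fin n) => ∀ x : Fin l, ρ (c x) = g x)).card := by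
    apply Finset.card_bij (fun π _ => π⁻¹)
    · intro π hπ
      simp only [Finset.mem_filter, Finset.mem_univ, true_and] at hπ ⊢
      exact hπ
    · intro a ha b hb hab
      exact inv_injective hab
    · intro ρ hρ
      simp only [Finset.mem_filter, Finset.mem_univ, true_and] at hρ
      exact ⟨ρ⁻¹, by simp only [Finset.mem_filter, Finset.mem_univ, true_and, inv_inv]; exact hρ, rfl⟩
  rw [hrev, hc]
  exact card_perm_extending hln g hginj

lemma Kempty {n l : ℕ} (lam : YoungDiagram) (hln : l ≤ n)
    (t : Fin n ≃ lam.cells) (θ γ σ : Equiv.Perm (Fin n))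
    (hθ : ∀ i : Fin n, l ≤ (i : ℕ) → θ i = i) (hγσ : γ * σ = θ)
    (hns : ¬ (∀ i : Fin n, l ≤ (i : ℕ) → σ i = i)) :
    (Finset.univ.filter (fun π : Equiv.Perm (Fin n) =>
        (∀ i : Fin n, (i : ℕ) = 0 → π i = i) ∧
        InColStab lam t (π⁻¹ * γ * π) ∧ InRowStab lam t (π⁻¹ * σ * π))).card = 0 := by
  rw [Finset.card_eq_zero, Finset.filter_eq_empty_iff]
  intro π _
  rintro ⟨hπ0, hcol, hrow⟩
  push_neg at hns
  obtain ⟨x, hxl, hxne⟩ := hns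
  have hrow1 : ((t (π⁻¹ (σ x)) : ℕ × ℕ)).1 = ((t (π⁻¹ x) : ℕ × ℕ)).1 := by
    have := hrow (π⁻¹ x)
    simpa [Equiv.Perm.mul_apply] using this
  have hθx : θ x = x := hθ x hxl
  have hcol1 : ((t (π⁻¹ x) : ℕ × ℕ)).2 = ((t (π⁻¹ (σ x)) : ℕ × ℕ)).2 := by
    have h := hcol (π⁻¹ (σ x))
    have hγσx : γ (σ x) = x := by
      have : (γ * σ) x = θ x := by rw [hγσ]
      simpa [Equiv.Perm.mul_apply, hθx] using this
    simpa [Equiv.Perm.mul_apply, hγσx] using h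
  have heq : t (π⁻¹ (σ x)) = t (π⁻¹ x) := by
    apply Subtype.ext
    exact Prod.ext hrow1 hcol1.symm
  have := π⁻¹.injective (t.injective heq)
  exact hxne this

section Inv

variable {n l : ℕ} (lam : YoungDiagram) (box : lam.cells) (hln : l ≤ n)

-- pointwise invariant function on Fin n induced by a coloring component
noncomputable def Fcomp (β : Fin l → lam.cells) (G : lam.cells → ℕ) (m : Fin n) : ℕ :=
  if h : (m : ℕ) < l then G (β ⟨(m : ℕ), h⟩) else 0

lemma Fcomp_c (β : Fin l → lam.cells) (G : lam.cells → ℕ) (x : Fin l) :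
    Fcomp lam β G (Fin.castLE hln x) = G (β x) := by
  have hx : ((Fin.castLE hln x : Fin n) : ℕ) < l := x.2
  have e1 : Fcomp lam β G (Fin.castLE hln x) = G (β ⟨((Fin.castLE hln x : Fin n) : ℕ), hx⟩) :=
    dif_pos hx
  rw [e1]
  have heq : (⟨((Fin.castLE hln x : Fin n) : ℕ), hx⟩ : Fin l) = x := by
    apply Fin.ext; simp
  rw [heq]

lemma small_to_small {n' l' : ℕ} (τ : Equiv.Perm (Fin n'))
    (hτ : ∀ i : Fin n', l' ≤ (i : ℕ) → τ i = i) (k : Fin n') (hk : (k : ℕ) < l') :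
    ((τ k : Fin n') : ℕ) < l' := by
  by_contra hb
  push_neg at hb
  have h1 := hτ (τ k) hb
  have h2 := τ.injective h1
  rw [h2] at hb
  omega

lemma pointwise_of_P (β : Fin l → lam.cells) (G : lam.cells → ℕ) (γ : Equiv.Perm (Fin n))
    (hbf : ∀ i : Fin n, l ≤ (i : ℕ) → γ i = i)
    (hP : ∀ x y : Fin l, γ.SameCycle (Fin.castLE hln x) (Fin.castLE hln y) →
      G (β x) = G (β y)) :
    ∀ m : Fin n, Fcomp lam β G (γ m) = Fcomp lam β G m := by
  intro m
  by_cases hm : (m : ℕ) < l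
  · have hγm : ((γ m : Fin n) : ℕ) < l := small_to_small γ hbf m hm
    have e1 : Fcomp lam β G (γ m) = G (β ⟨((γ m : Fin n) : ℕ), hγm⟩) := dif_pos hγm
    have e2 : Fcomp lam β G m = G (β ⟨(m : ℕ), hm⟩) := dif_pos hm
    rw [e1, e2]
    have hcm : Fin.castLE hln ⟨(m : ℕ), hm⟩ = m := by apply Fin.ext; simp
    have hcγm : Fin.castLE hln ⟨((γ m : Fin n) : ℕ), hγm⟩ = γ m := by apply Fin.ext; simp
    refine (hP ⟨(m : ℕ), hm⟩ ⟨((γ m : Fin n) : ℕ), hγm⟩ ⟨1, ?_⟩).symm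
    rw [zpow_one, hcm, hcγm]
  · have h1 : γ m = m := hbf m (by omega)
    rw [h1]

lemma P_of_pointwise (β : Fin l → lam.cells) (G : lam.cells → ℕ) (γ : Equiv.Perm (Fin n))
    (hpt : ∀ m : Fin n, Fcomp lam β G (γ m) = Fcomp lam β G m) :
    ∀ x y : Fin l, γ.SameCycle (Fin.castLE hln x) (Fin.castLE hln y) →
      G (β x) = G (β y) := by
  intro x y hxy
  have := const_on_sameCycle hpt hxy
  rwa [Fcomp_c, Fcomp_c] at this

-- one step of the involution
lemma Cmap (θ γ σ : Equiv.Perm (Fin n)) (β : Fin l → lam.cells) (x y : Fin l)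
    (hxy : x ≠ y) (hβ : β x = β y)
    (hC : (∀ i : Fin n, l ≤ (i : ℕ) → γ i = i) ∧ (∀ i : Fin n, l ≤ (i : ℕ) → σ i = i) ∧
      γ * σ = θ ∧ Pbeta lam box hln γ σ β) :
    (∀ i : Fin n, l ≤ (i : ℕ) → (γ * Equiv.swap (Fin.castLE hln x) (Fin.castLE hln y)) i = i) ∧
    (∀ i : Fin n, l ≤ (i : ℕ) → (Equiv.swap (Fin.castLE hln x) (Fin.castLE hln y) * σ) i = i) ∧
    (γ * Equiv.swap (Fin.castLE hln x) (Fin.castLE hln y)) *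
      (Equiv.swap (Fin.castLE hln x) (Fin.castLE hln y) * σ) = θ ∧
    Pbeta lam box hln (γ * Equiv.swap (Fin.castLE hln x) (Fin.castLE hln y))
      (Equiv.swap (Fin.castLE hln x) (Fin.castLE hln y) * σ) β := by
  obtain ⟨hbfγ, hbfσ, hθ, hP1, hP2, hP3⟩ := hC
  set cx := Fin.castLE hln x with hcx
  set cy := Fin.castLE hln y with hcy
  set s := Equiv.swap cx cy with hs
  have hsbig : ∀ i : Fin n, l ≤ (i : ℕ) → s i = i := by
    intro i hi
    apply Equiv.swap_apply_of_ne_of_ne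
    · intro hicx; rw [hicx] at hi; have := x.2; simp [hcx] at hi; omega
    · intro hicy; rw [hicy] at hi; have := y.2; simp [hcy] at hi; omega
  have hsmallswap : ∀ m : Fin n, (m : ℕ) < l → ((s m : Fin n) : ℕ) < l :=
    small_to_small s hsbig
  -- swap-invariance of the component functions
  have hswapF : ∀ G : lam.cells → ℕ, ∀ m : Fin n,
      Fcomp lam β G (s m) = Fcomp lam β G m := by
    intro G m
    have hFcx : Fcomp lam β G cx = Fcomp lam β G cy := by
      rw [hcx, Fcomp_c, hcy, Fcomp_c, hβ]
    by_cases h1 : m = cx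
    · rw [h1, hs, Equiv.swap_apply_left]
      exact hFcx.symm
    · by_cases h2 : m = cy
      · rw [h2, hs, Equiv.swap_apply_right]
        exact hFcx
      · rw [hs, Equiv.swap_apply_of_ne_of_ne h1 h2]
  refine ⟨?_, ?_, ?_, ?_, ?_, hP3⟩
  · intro i hi
    have h1 : (γ * s) i = γ (s i) := rfl
    rw [h1, hsbig i hi, hbfγ i hi]
  · intro i hi
    have h1 : (s * σ) i = s (σ i) := rfl
    rw [h1, hbfσ i hi, hsbig i hi]
  · rw [mul_assoc, ← mul_assoc s s σ, Equiv.swap_mul_self, one_mul, hθ]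
  · -- column condition for γ * s
    apply P_of_pointwise lam hln β (fun u => ((u : ℕ × ℕ)).2)
    intro m
    have h1 : (γ * s) m = γ (s m) := rfl
    rw [h1]
    rw [pointwise_of_P lam hln β _ γ hbfγ hP1 (s m)]
    exact hswapF _ m
  · -- row condition for s * σ
    apply P_of_pointwise lam hln β (fun u => ((u : ℕ × ℕ)).1)
    intro m
    have h1 : (s * σ) m = s (σ m) := rfl
    rw [h1]
    rw [hswapF _ (σ m)]
    exact pointwise_of_P lam hln β _ σ hbfσ hP2 m

end Inv

section Inv2

variable {n l : ℕ}

noncomputable def invF (lam : YoungDiagram) (box : lam.cells) (hln : l ≤ n)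
    (θ : Equiv.Perm (Fin n))
    (a : Equiv.Perm (Fin n) × Equiv.Perm (Fin n) × (Fin l → lam.cells)) : ℂ :=
  if ((∀ i : Fin n, l ≤ (i : ℕ) → a.1 i = i) ∧ (∀ i : Fin n, l ≤ (i : ℕ) → a.2.1 i = i) ∧
      a.1 * a.2.1 = θ ∧ Pbeta lam box hln a.1 a.2.1 a.2.2 ∧ ¬ Function.Injective a.2.2)
    then ((Equiv.Perm.sign a.1 : ℤ) : ℂ) else 0

noncomputable def invG (lam : YoungDiagram) (hln : l ≤ n)
    (a : Equiv.Perm (Fin n) × Equiv.Perm (Fin n) × (Fin l → lam.cells)) :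
    Equiv.Perm (Fin n) × Equiv.Perm (Fin n) × (Fin l → lam.cells) :=
  if h : ∃ p : Fin l × Fin l, p.1 ≠ p.2 ∧ a.2.2 p.1 = a.2.2 p.2 then
    (a.1 * Equiv.swap (Fin.castLE hln h.choose.1) (Fin.castLE hln h.choose.2),
     (Equiv.swap (Fin.castLE hln h.choose.1) (Fin.castLE hln h.choose.2) * a.2.1,
      a.2.2))
  else a

lemma sum_noninj_zero (lam : YoungDiagram) (box : lam.cells) (hln : l ≤ n)
    (θ : Equiv.Perm (Fin n)) :
    ∑ a : Equiv.Perm (Fin n) × Equiv.Perm (Fin n) × (Fin l → lam.cells),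
      (if ((∀ i : Fin n, l ≤ (i : ℕ) → a.1 i = i) ∧ (∀ i : Fin n, l ≤ (i : ℕ) → a.2.1 i = i) ∧
          a.1 * a.2.1 = θ ∧ Pbeta lam box hln a.1 a.2.1 a.2.2 ∧ ¬ Function.Injective a.2.2)
        then ((Equiv.Perm.sign a.1 : ℤ) : ℂ) else 0) = 0 := by
  classical
  set f := invF lam box hln θ with hfdef
  set g0 := invG lam hln with hg0def
  have hfeq : ∀ a : Equiv.Perm (Fin n) × Equiv.Perm (Fin n) × (Fin l → lam.cells),
      f a = if ((∀ i : Fin n, l ≤ (i : ℕ) → a.1 i = i) ∧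
        (∀ i : Fin n, l ≤ (i : ℕ) → a.2.1 i = i) ∧
        a.1 * a.2.1 = θ ∧ Pbeta lam box hln a.1 a.2.1 a.2.2 ∧ ¬ Function.Injective a.2.2)
      then ((Equiv.Perm.sign a.1 : ℤ) : ℂ) else 0 := fun a => rfl
  have hg0eq : ∀ a : Equiv.Perm (Fin n) × Equiv.Perm (Fin n) × (Fin l → lam.cells),
      g0 a = if h : ∃ p : Fin l × Fin l, p.1 ≠ p.2 ∧ a.2.2 p.1 = a.2.2 p.2 then
        (a.1 * Equiv.swap (Fin.castLE hln h.choose.1) (Fin.castLE hln h.choose.2),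
         (Equiv.swap (Fin.castLE hln h.choose.1) (Fin.castLE hln h.choose.2) * a.2.1,
          a.2.2))
      else a := fun a => rfl
  show ∑ a, f a = 0
  have key : ∀ (γ σ : Equiv.Perm (Fin n)) (β : Fin l → lam.cells)
      (h : ∃ p : Fin l × Fin l, p.1 ≠ p.2 ∧ β p.1 = β p.2),
      f (γ * Equiv.swap (Fin.castLE hln h.choose.1) (Fin.castLE hln h.choose.2),
         Equiv.swap (Fin.castLE hln h.choose.1) (Fin.castLE hln h.choose.2) * σ, β)
        = - f (γ, σ, β) := by
    intro γ σ β h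
    obtain ⟨hne, hββ⟩ := h.choose_spec
    have hcne : Fin.castLE hln h.choose.1 ≠ Fin.castLE hln h.choose.2 := by
      intro hc; exact hne (Fin.castLE_injective hln hc)
    set s := Equiv.swap (Fin.castLE hln h.choose.1) (Fin.castLE hln h.choose.2) with hs
    by_cases hC : (∀ i : Fin n, l ≤ (i : ℕ) → γ i = i) ∧ (∀ i : Fin n, l ≤ (i : ℕ) → σ i = i) ∧
        γ * σ = θ ∧ Pbeta lam box hln γ σ β ∧ ¬ Function.Injective β
    · obtain ⟨h1, h2, h3, h4, h5⟩ := hC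
      have hC' := Cmap lam box hln θ γ σ β h.choose.1 h.choose.2 hne hββ ⟨h1, h2, h3, h4⟩
      have hl : f (γ, σ, β) = ((Equiv.Perm.sign γ : ℤ) : ℂ) := by
        rw [hfeq]; exact if_pos ⟨h1, h2, h3, h4, h5⟩
      have hr : f (γ * s, s * σ, β) = ((Equiv.Perm.sign (γ * s) : ℤ) : ℂ) := by
        rw [hfeq]; exact if_pos ⟨hC'.1, hC'.2.1, hC'.2.2.1, hC'.2.2.2, h5⟩
      rw [hl, hr]
      have hsgn : Equiv.Perm.sign (γ * s) = - Equiv.Perm.sign γ := by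
        rw [Equiv.Perm.sign_mul, Equiv.Perm.sign_swap hcne, mul_neg_one]
      rw [hsgn]
      push_cast
      ring
    · have hl : f (γ, σ, β) = 0 := by rw [hfeq]; exact if_neg hC
      have hr : f (γ * s, s * σ, β) = 0 := by
        rw [hfeq]
        apply if_neg
        intro hC'
        apply hC
        obtain ⟨h1, h2, h3, h4, h5⟩ := hC'
        have hC'' := Cmap lam box hln θ (γ * s) (s * σ) β h.choose.1 h.choose.2 hne hββ
          ⟨h1, h2, h3, h4⟩
        have e1 : (γ * s) * s = γ := by
          rw [mul_assoc, hs, Equiv.swap_mul_self, mul_one]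
        have e2 : s * (s * σ) = σ := by
          rw [← mul_assoc, hs, Equiv.swap_mul_self, one_mul]
        rw [e1, e2] at hC''
        exact ⟨hC''.1, hC''.2.1, hC''.2.2.1, hC''.2.2.2, h5⟩
      rw [hl, hr, neg_zero]
  have H1 : ∀ a, f a + f (g0 a) = 0 := by
    intro a
    by_cases h : ∃ p : Fin l × Fin l, p.1 ≠ p.2 ∧ a.2.2 p.1 = a.2.2 p.2
    · have hga : g0 a =
          (a.1 * Equiv.swap (Fin.castLE hln h.choose.1) (Fin.castLE hln h.choose.2),
           Equiv.swap (Fin.castLE hln h.choose.1) (Fin.castLE hln h.choose.2) * a.2.1,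
           a.2.2) := by rw [hg0eq]; exact dif_pos h
      rw [hga, key a.1 a.2.1 a.2.2 h]
      have : a = (a.1, a.2.1, a.2.2) := rfl
      rw [← this]
      ring
    · have hga : g0 a = a := by rw [hg0eq]; exact dif_neg h
      rw [hga]
      have hfa : f a = 0 := by
        rw [hfeq]
        apply if_neg
        rintro ⟨-, -, -, -, hninj⟩
        rw [Function.not_injective_iff] at hninj
        obtain ⟨u, v, huv, hne⟩ := hninj
        exact h ⟨(u, v), hne, huv⟩
      rw [hfa, add_zero]
  have H2 : ∀ a, f a ≠ 0 → g0 a ≠ a := by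
    intro a hfa
    have hC : (∀ i : Fin n, l ≤ (i : ℕ) → a.1 i = i) ∧
        (∀ i : Fin n, l ≤ (i : ℕ) → a.2.1 i = i) ∧
        a.1 * a.2.1 = θ ∧ Pbeta lam box hln a.1 a.2.1 a.2.2 ∧
        ¬ Function.Injective a.2.2 := by
      by_contra hC
      exact hfa (by rw [hfeq]; exact if_neg hC)
    have h : ∃ p : Fin l × Fin l, p.1 ≠ p.2 ∧ a.2.2 p.1 = a.2.2 p.2 := by
      have hninj := hC.2.2.2.2
      rw [Function.not_injective_iff] at hninj
      obtain ⟨u, v, huv, hne⟩ := hninj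
      exact ⟨(u, v), hne, huv⟩
    have hga : g0 a =
        (a.1 * Equiv.swap (Fin.castLE hln h.choose.1) (Fin.castLE hln h.choose.2),
         Equiv.swap (Fin.castLE hln h.choose.1) (Fin.castLE hln h.choose.2) * a.2.1,
         a.2.2) := by rw [hg0eq]; exact dif_pos h
    rw [hga]
    intro heq
    have h1 := congrArg Prod.fst heq
    simp only [] at h1
    have hcne : Fin.castLE hln h.choose.1 ≠ Fin.castLE hln h.choose.2 := by
      intro hc; exact h.choose_spec.1 (Fin.castLE_injective hln hc)
    have hs1 : Equiv.swap (Fin.castLE hln h.choose.1) (Fin.castLE hln h.choose.2) = 1 := by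
      apply mul_left_cancel (a := a.1)
      rw [mul_one]
      exact h1
    rw [Equiv.swap_eq_one_iff] at hs1
    exact hcne hs1
  have H4 : ∀ a, g0 (g0 a) = a := by
    intro a
    by_cases h : ∃ p : Fin l × Fin l, p.1 ≠ p.2 ∧ a.2.2 p.1 = a.2.2 p.2
    · have hga : g0 a =
          (a.1 * Equiv.swap (Fin.castLE hln h.choose.1) (Fin.castLE hln h.choose.2),
           Equiv.swap (Fin.castLE hln h.choose.1) (Fin.castLE hln h.choose.2) * a.2.1,
           a.2.2) := by rw [hg0eq]; exact dif_pos h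
      rw [hga]
      have hga2 : g0 (a.1 * Equiv.swap (Fin.castLE hln h.choose.1) (Fin.castLE hln h.choose.2),
           Equiv.swap (Fin.castLE hln h.choose.1) (Fin.castLE hln h.choose.2) * a.2.1,
           a.2.2) =
          ((a.1 * Equiv.swap (Fin.castLE hln h.choose.1) (Fin.castLE hln h.choose.2)) *
            Equiv.swap (Fin.castLE hln h.choose.1) (Fin.castLE hln h.choose.2),
           Equiv.swap (Fin.castLE hln h.choose.1) (Fin.castLE hln h.choose.2) *
            (Equiv.swap (Fin.castLE hln h.choose.1) (Fin.castLE hln h.choose.2) * a.2.1),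
           a.2.2) := by rw [hg0eq]; exact dif_pos h
      rw [hga2]
      have e1 : (a.1 * Equiv.swap (Fin.castLE hln h.choose.1) (Fin.castLE hln h.choose.2)) *
          Equiv.swap (Fin.castLE hln h.choose.1) (Fin.castLE hln h.choose.2) = a.1 := by
        rw [mul_assoc, Equiv.swap_mul_self, mul_one]
      have e2 : Equiv.swap (Fin.castLE hln h.choose.1) (Fin.castLE hln h.choose.2) *
          (Equiv.swap (Fin.castLE hln h.choose.1) (Fin.castLE hln h.choose.2) * a.2.1) =
            a.2.1 := by
        rw [← mul_assoc, Equiv.swap_mul_self, one_mul]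
      rw [e1, e2]
    · have hga : g0 a = a := by rw [hg0eq]; exact dif_neg h
      rw [hga, hga]
  exact Finset.sum_involution (fun a _ => g0 a) (fun a _ => H1 a) (fun a _ => H2 a)
    (fun a ha => Finset.mem_univ _) (fun a _ => H4 a)

end Inv2

/-- **Main Theorem: the Stanley–Féray–Śniady formula for generalized characters.**
Let `λ ⊢ n`, `μ ⊢ n-1` with `λ → μ`, fix a `λ`-tableau `t` with `1` in the box `λ∖μ`, let
`2 ≤ l ≤ n` and `θ ∈ S_l`.  Then
`φ_{λ,μ}(θ) = (1/(n-1)_{l-1}) ∑_{γ,σ ∈ S_l, γσ=θ} sign(γ) N^{λ,μ}(γ,σ)`, where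
`φ_{λ,μ} = (1/(n-1)!) ∑_{π ∈ S̃_{n-1}} π E_t π⁻¹` and `(n-1)_{l-1}` is the falling
factorial. -/
theorem genChar_eq_signed_sum_Ncol
    {n : ℕ} (hn : 2 ≤ n) (lam mu : YoungDiagram)
    (hlam : lam.card = n) (hmu : mu.card = n - 1) (hsub : mu ≤ lam)
    (box : lam.cells) (hbox : (box : ℕ × ℕ) ∉ mu)
    (t : Fin n ≃ lam.cells) (ht : ∀ i : Fin n, (i : ℕ) = 0 → t i = box)
    (l : ℕ) (hl2 : 2 ≤ l) (hln : l ≤ n)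
    (θ : Equiv.Perm (Fin n)) (hθ : ∀ i : Fin n, l ≤ (i : ℕ) → θ i = i) :
    (genChar lam t).coeff θ =
      (((n - 1).descFactorial (l - 1) : ℕ) : ℂ)⁻¹ *
        ∑ γ : Equiv.Perm (Fin n), ∑ σ : Equiv.Perm (Fin n),
          if (∀ i : Fin n, l ≤ (i : ℕ) → γ i = i) ∧ (∀ i : Fin n, l ≤ (i : ℕ) → σ i = i) ∧
              γ * σ = θ then
            ((Equiv.Perm.sign γ : ℤ) : ℂ) * (Ncol lam box l hln γ σ : ℂ)
          else 0 := by
  classical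
  -- Step A : unfold genChar at θ
  have hA : (genChar lam t).coeff θ = ((n - 1).factorial : ℂ)⁻¹ *
      ∑ π : Equiv.Perm (Fin n), (if (∀ i : Fin n, (i : ℕ) = 0 → π i = i)
        then (MonoidAlgebra.of ℂ (Equiv.Perm (Fin n)) π * youngSym lam t *
          MonoidAlgebra.of ℂ (Equiv.Perm (Fin n)) π⁻¹).coeff θ else 0) := by
    rw [genChar, MonoidAlgebra.coeff_smul, Finsupp.smul_apply, MonoidAlgebra.coeff_sum, Finset.sum_apply', smul_eq_mul]
    congr 1
    apply Finset.sum_congr rfl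
    intro π _
    split_ifs <;> simp
  -- Step B : expand the Young symmetrizer
  have hB : ∀ π : Equiv.Perm (Fin n),
      (MonoidAlgebra.of ℂ (Equiv.Perm (Fin n)) π * youngSym lam t *
        MonoidAlgebra.of ℂ (Equiv.Perm (Fin n)) π⁻¹).coeff θ =
      ∑ γ : Equiv.Perm (Fin n), ∑ σ : Equiv.Perm (Fin n),
        (if (InColStab lam t γ ∧ InRowStab lam t σ) ∧ π * (γ * σ) * π⁻¹ = θ
          then ((Equiv.Perm.sign γ : ℤ) : ℂ) else 0) := by
    intro π
    rw [youngSym, Finset.mul_sum, Finset.sum_mul, MonoidAlgebra.coeff_sum, Finset.sum_apply']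
    apply Finset.sum_congr rfl
    intro γ _
    rw [Finset.mul_sum, Finset.sum_mul, MonoidAlgebra.coeff_sum, Finset.sum_apply']
    apply Finset.sum_congr rfl
    intro σ _
    by_cases hc : InColStab lam t γ ∧ InRowStab lam t σ
    · rw [if_pos hc, MonoidAlgebra.of_apply, MonoidAlgebra.of_apply,
        MonoidAlgebra.single_mul_single, MonoidAlgebra.single_mul_single,
        one_mul, mul_one, MonoidAlgebra.single_apply]
      simp [hc]
    · rw [if_neg hc]
      simp [hc]
  -- Step C : conjugate the pair (γ, σ) by π
  have hC : ∀ π : Equiv.Perm (Fin n),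
      (∑ γ : Equiv.Perm (Fin n), ∑ σ : Equiv.Perm (Fin n),
        (if (InColStab lam t γ ∧ InRowStab lam t σ) ∧ π * (γ * σ) * π⁻¹ = θ
          then ((Equiv.Perm.sign γ : ℤ) : ℂ) else 0)) =
      ∑ γ : Equiv.Perm (Fin n), ∑ σ : Equiv.Perm (Fin n),
        (if (InColStab lam t (π⁻¹ * γ * π) ∧ InRowStab lam t (π⁻¹ * σ * π)) ∧ γ * σ = θ
          then ((Equiv.Perm.sign γ : ℤ) : ℂ) else 0) := by
    intro π
    let e : Equiv.Perm (Fin n) ≃ Equiv.Perm (Fin n) :=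
      { toFun := fun γ => π * γ * π⁻¹
        invFun := fun γ => π⁻¹ * γ * π
        left_inv := fun γ => by group
        right_inv := fun γ => by group }
    have he : ∀ γ : Equiv.Perm (Fin n), e γ = π * γ * π⁻¹ := fun γ => rfl
    refine Fintype.sum_equiv e _ _ ?_
    intro γ
    refine Fintype.sum_equiv e _ _ ?_
    intro σ
    rw [he, he]
    have h1 : π⁻¹ * (π * γ * π⁻¹) * π = γ := by group
    have h2 : π⁻¹ * (π * σ * π⁻¹) * π = σ := by group
    have h3 : (π * γ * π⁻¹) * (π * σ * π⁻¹) = π * (γ * σ) * π⁻¹ := by group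
    have h4 : Equiv.Perm.sign (π * γ * π⁻¹) = Equiv.Perm.sign γ := by
      rw [Equiv.Perm.sign_mul, Equiv.Perm.sign_mul, Equiv.Perm.sign_inv,
        mul_comm (Equiv.Perm.sign π) (Equiv.Perm.sign γ), mul_assoc,
        Int.units_mul_self, mul_one]
    rw [h1, h2, h3, h4]
  -- Step D : reorganize; π innermost
  have hD1 : ∀ π : Equiv.Perm (Fin n),
      (if (∀ i : Fin n, (i : ℕ) = 0 → π i = i)
        then (MonoidAlgebra.of ℂ (Equiv.Perm (Fin n)) π * youngSym lam t *
          MonoidAlgebra.of ℂ (Equiv.Perm (Fin n)) π⁻¹).coeff θ else 0) =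
      ∑ γ : Equiv.Perm (Fin n), ∑ σ : Equiv.Perm (Fin n),
        (if γ * σ = θ ∧ ((∀ i : Fin n, (i : ℕ) = 0 → π i = i) ∧
            InColStab lam t (π⁻¹ * γ * π) ∧ InRowStab lam t (π⁻¹ * σ * π))
          then ((Equiv.Perm.sign γ : ℤ) : ℂ) else 0) := by
    intro π
    by_cases hπ0 : ∀ i : Fin n, (i : ℕ) = 0 → π i = i
    · rw [if_pos hπ0, hB π, hC π]
      apply Finset.sum_congr rfl
      intro γ _
      apply Finset.sum_congr rfl
      intro σ _
      apply if_congr _ rfl rfl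
      constructor
      · rintro ⟨⟨h5, h6⟩, h7⟩; exact ⟨h7, hπ0, h5, h6⟩
      · rintro ⟨h7, -, h5, h6⟩; exact ⟨⟨h5, h6⟩, h7⟩
    · rw [if_neg hπ0]
      symm
      apply Finset.sum_eq_zero
      intro γ _
      apply Finset.sum_eq_zero
      intro σ _
      apply if_neg
      rintro ⟨-, h5, -⟩
      exact hπ0 h5
  have hD : (genChar lam t).coeff θ = ((n - 1).factorial : ℂ)⁻¹ *
      ∑ γ : Equiv.Perm (Fin n), ∑ σ : Equiv.Perm (Fin n), ∑ π : Equiv.Perm (Fin n),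
        (if γ * σ = θ ∧ ((∀ i : Fin n, (i : ℕ) = 0 → π i = i) ∧
            InColStab lam t (π⁻¹ * γ * π) ∧ InRowStab lam t (π⁻¹ * σ * π))
          then ((Equiv.Perm.sign γ : ℤ) : ℂ) else 0) := by
    rw [hA]
    congr 1
    rw [Finset.sum_congr rfl (fun π _ => hD1 π), Finset.sum_comm]
    apply Finset.sum_congr rfl
    intro γ _
    rw [Finset.sum_comm]
  -- Step E : evaluate the inner sum over π as a cardinality
  have hE : ∀ γ σ : Equiv.Perm (Fin n),
      (∑ π : Equiv.Perm (Fin n),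
        (if γ * σ = θ ∧ ((∀ i : Fin n, (i : ℕ) = 0 → π i = i) ∧
            InColStab lam t (π⁻¹ * γ * π) ∧ InRowStab lam t (π⁻¹ * σ * π))
          then ((Equiv.Perm.sign γ : ℤ) : ℂ) else 0)) =
      (if γ * σ = θ then ((Equiv.Perm.sign γ : ℤ) : ℂ) *
        (((Finset.univ.filter (fun π : Equiv.Perm (Fin n) =>
          (∀ i : Fin n, (i : ℕ) = 0 → π i = i) ∧
          InColStab lam t (π⁻¹ * γ * π) ∧ InRowStab lam t (π⁻¹ * σ * π))).card : ℕ) : ℂ)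
        else 0) := by
    intro γ σ
    by_cases hgs : γ * σ = θ
    · rw [if_pos hgs]
      have h5 : ∀ π : Equiv.Perm (Fin n),
          (if γ * σ = θ ∧ ((∀ i : Fin n, (i : ℕ) = 0 → π i = i) ∧
              InColStab lam t (π⁻¹ * γ * π) ∧ InRowStab lam t (π⁻¹ * σ * π))
            then ((Equiv.Perm.sign γ : ℤ) : ℂ) else 0) =
          (if ((∀ i : Fin n, (i : ℕ) = 0 → π i = i) ∧
              InColStab lam t (π⁻¹ * γ * π) ∧ InRowStab lam t (π⁻¹ * σ * π))
            then ((Equiv.Perm.sign γ : ℤ) : ℂ) else 0) := by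
        intro π
        apply if_congr _ rfl rfl
        simp [hgs]
      rw [Finset.sum_congr rfl (fun π _ => h5 π)]
      rw [Finset.sum_ite, Finset.sum_const, Finset.sum_const_zero, add_zero,
        nsmul_eq_mul, mul_comm]
    · rw [if_neg hgs]
      apply Finset.sum_eq_zero
      intro π _
      apply if_neg
      rintro ⟨h5, -⟩
      exact hgs h5
  -- Step F : identify the count via Kcard / Kempty
  have hF : ∀ γ σ : Equiv.Perm (Fin n),
      (if γ * σ = θ then ((Equiv.Perm.sign γ : ℤ) : ℂ) *
        (((Finset.univ.filter (fun π : Equiv.Perm (Fin n) =>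
          (∀ i : Fin n, (i : ℕ) = 0 → π i = i) ∧
          InColStab lam t (π⁻¹ * γ * π) ∧ InRowStab lam t (π⁻¹ * σ * π))).card : ℕ) : ℂ)
        else 0) =
      (if (∀ i : Fin n, l ≤ (i : ℕ) → γ i = i) ∧ (∀ i : Fin n, l ≤ (i : ℕ) → σ i = i) ∧
          γ * σ = θ then
        ((Equiv.Perm.sign γ : ℤ) : ℂ) *
          (((Finset.univ.filter (fun β : Fin l → lam.cells =>
            Pbeta lam box hln γ σ β ∧ Function.Injective β)).card : ℕ) : ℂ) *
          (((n - l).factorial : ℕ) : ℂ)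
        else 0) := by
    intro γ σ
    by_cases hgs : γ * σ = θ
    · by_cases hbfσ : ∀ i : Fin n, l ≤ (i : ℕ) → σ i = i
      · have hbfγ : ∀ i : Fin n, l ≤ (i : ℕ) → γ i = i := by
          intro i hi
          have h1 : σ i = i := hbfσ i hi
          have h2 : γ (σ i) = θ i := by rw [← hgs]; rfl
          rw [h1, hθ i hi] at h2
          exact h2
        rw [if_pos hgs, if_pos ⟨hbfγ, hbfσ, hgs⟩,
          Kcard lam box hln (by omega) t ht γ σ hbfγ hbfσ]
        push_cast
        ring
      · rw [if_pos hgs, Kempty lam hln t θ γ σ hθ hgs hbfσ]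
        rw [if_neg (by rintro ⟨-, h6, -⟩; exact hbfσ h6)]
        simp
    · rw [if_neg hgs, if_neg (by rintro ⟨-, -, h6⟩; exact hgs h6)]
  -- Step G : the non-injective colorings cancel
  have hZ : (∑ γ : Equiv.Perm (Fin n), ∑ σ : Equiv.Perm (Fin n),
      (if (∀ i : Fin n, l ≤ (i : ℕ) → γ i = i) ∧ (∀ i : Fin n, l ≤ (i : ℕ) → σ i = i) ∧
          γ * σ = θ then
        ((Equiv.Perm.sign γ : ℤ) : ℂ) *
          (((Finset.univ.filter (fun β : Fin l → lam.cells =>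
            Pbeta lam box hln γ σ β ∧ ¬ Function.Injective β)).card : ℕ) : ℂ)
        else 0)) = 0 := by
    have h6 : ∀ γ σ : Equiv.Perm (Fin n),
        (if (∀ i : Fin n, l ≤ (i : ℕ) → γ i = i) ∧ (∀ i : Fin n, l ≤ (i : ℕ) → σ i = i) ∧
            γ * σ = θ then
          ((Equiv.Perm.sign γ : ℤ) : ℂ) *
            (((Finset.univ.filter (fun β : Fin l → lam.cells =>
              Pbeta lam box hln γ σ β ∧ ¬ Function.Injective β)).card : ℕ) : ℂ)
          else 0) =
        ∑ β : Fin l → lam.cells,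
          (if ((∀ i : Fin n, l ≤ (i : ℕ) → γ i = i) ∧ (∀ i : Fin n, l ≤ (i : ℕ) → σ i = i) ∧
              γ * σ = θ ∧ Pbeta lam box hln γ σ β ∧ ¬ Function.Injective β)
            then ((Equiv.Perm.sign γ : ℤ) : ℂ) else 0) := by
      intro γ σ
      by_cases hc : (∀ i : Fin n, l ≤ (i : ℕ) → γ i = i) ∧
          (∀ i : Fin n, l ≤ (i : ℕ) → σ i = i) ∧ γ * σ = θ
      · rw [if_pos hc, ← Finset.sum_boole, Finset.mul_sum]
        apply Finset.sum_congr rfl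
        intro β _
        rw [mul_ite, mul_one, mul_zero]
        apply if_congr _ rfl rfl
        constructor
        · intro h7; exact ⟨hc.1, hc.2.1, hc.2.2, h7.1, h7.2⟩
        · intro h7; exact ⟨h7.2.2.2.1, h7.2.2.2.2⟩
      · rw [if_neg hc]
        symm
        apply Finset.sum_eq_zero
        intro β _
        apply if_neg
        rintro ⟨h7, h8, h9, -⟩
        exact hc ⟨h7, h8, h9⟩
    rw [Finset.sum_congr rfl (fun γ _ => Finset.sum_congr rfl (fun σ _ => h6 γ σ))]
    have h7 := sum_noninj_zero lam box hln θ
    rw [Fintype.sum_prod_type] at h7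
    convert h7 using 2 with γ
    rw [Fintype.sum_prod_type]
  -- Step H : split the count into injective + non-injective
  have hH : (∑ γ : Equiv.Perm (Fin n), ∑ σ : Equiv.Perm (Fin n),
      (if (∀ i : Fin n, l ≤ (i : ℕ) → γ i = i) ∧ (∀ i : Fin n, l ≤ (i : ℕ) → σ i = i) ∧
          γ * σ = θ then
        ((Equiv.Perm.sign γ : ℤ) : ℂ) *
          (((Finset.univ.filter (fun β : Fin l → lam.cells =>
            Pbeta lam box hln γ σ β ∧ Function.Injective β)).card : ℕ) : ℂ)
        else 0)) =
      ∑ γ : Equiv.Perm (Fin n), ∑ σ : Equiv.Perm (Fin n),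
      (if (∀ i : Fin n, l ≤ (i : ℕ) → γ i = i) ∧ (∀ i : Fin n, l ≤ (i : ℕ) → σ i = i) ∧
          γ * σ = θ then
        ((Equiv.Perm.sign γ : ℤ) : ℂ) * ((Ncol lam box l hln γ σ : ℕ) : ℂ)
        else 0) := by
    have hsplit : ∀ γ σ : Equiv.Perm (Fin n),
        ((Ncol lam box l hln γ σ : ℕ) : ℂ) =
        (((Finset.univ.filter (fun β : Fin l → lam.cells =>
            Pbeta lam box hln γ σ β ∧ Function.Injective β)).card : ℕ) : ℂ) +
        (((Finset.univ.filter (fun β : Fin l → lam.cells =>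
            Pbeta lam box hln γ σ β ∧ ¬ Function.Injective β)).card : ℕ) : ℂ) := by
      intro γ σ
      rw [Ncol_eq_card lam box hln γ σ, ← Nat.cast_add]
      congr 1
      rw [← Finset.filter_filter, ← Finset.filter_filter]
      have h9 := Finset.card_filter_add_card_filter_not
        (s := Finset.univ.filter (fun β : Fin l → lam.cells => Pbeta lam box hln γ σ β))
        (p := fun β => Function.Injective β)
      simpa using h9.symm
    have expand : ∀ γ σ : Equiv.Perm (Fin n),
        (if (∀ i : Fin n, l ≤ (i : ℕ) → γ i = i) ∧ (∀ i : Fin n, l ≤ (i : ℕ) → σ i = i) ∧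
            γ * σ = θ then
          ((Equiv.Perm.sign γ : ℤ) : ℂ) * ((Ncol lam box l hln γ σ : ℕ) : ℂ)
          else 0) =
        (if (∀ i : Fin n, l ≤ (i : ℕ) → γ i = i) ∧ (∀ i : Fin n, l ≤ (i : ℕ) → σ i = i) ∧
            γ * σ = θ then
          ((Equiv.Perm.sign γ : ℤ) : ℂ) *
            (((Finset.univ.filter (fun β : Fin l → lam.cells =>
              Pbeta lam box hln γ σ β ∧ Function.Injective β)).card : ℕ) : ℂ)
          else 0) +
        (if (∀ i : Fin n, l ≤ (i : ℕ) → γ i = i) ∧ (∀ i : Fin n, l ≤ (i : ℕ) → σ i = i) ∧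
            γ * σ = θ then
          ((Equiv.Perm.sign γ : ℤ) : ℂ) *
            (((Finset.univ.filter (fun β : Fin l → lam.cells =>
              Pbeta lam box hln γ σ β ∧ ¬ Function.Injective β)).card : ℕ) : ℂ)
          else 0) := by
      intro γ σ
      by_cases hc : (∀ i : Fin n, l ≤ (i : ℕ) → γ i = i) ∧
          (∀ i : Fin n, l ≤ (i : ℕ) → σ i = i) ∧ γ * σ = θ
      · rw [if_pos hc, if_pos hc, if_pos hc, hsplit γ σ, mul_add]
      · rw [if_neg hc, if_neg hc, if_neg hc, add_zero]
    rw [Finset.sum_congr rfl (fun γ _ => Finset.sum_congr rfl (fun σ _ => expand γ σ))]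
    simp only [Finset.sum_add_distrib]
    rw [hZ, add_zero]
  -- Step I : arithmetic with factorials
  have hfact : ((n - 1).factorial : ℂ)⁻¹ * (((n - l).factorial : ℕ) : ℂ) =
      (((n - 1).descFactorial (l - 1) : ℕ) : ℂ)⁻¹ := by
    have h1 : (n - l).factorial * (n - 1).descFactorial (l - 1) = (n - 1).factorial := by
      have h2 := Nat.factorial_mul_descFactorial (n := n - 1) (k := l - 1) (by omega)
      have h3 : n - 1 - (l - 1) = n - l := by omega
      rwa [h3] at h2
    have hd0 : (((n - 1).descFactorial (l - 1) : ℕ) : ℂ) ≠ 0 := by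
      rw [Ne, Nat.cast_eq_zero]
      intro h4
      rw [Nat.descFactorial_eq_zero_iff_lt] at h4
      omega
    have hf0 : ((n - 1).factorial : ℂ) ≠ 0 := Nat.cast_ne_zero.mpr (Nat.factorial_ne_zero _)
    field_simp
    exact_mod_cast h1
  -- Put everything together
  rw [hD]
  rw [Finset.sum_congr rfl (fun γ _ => Finset.sum_congr rfl (fun σ _ => by rw [hE γ σ, hF γ σ]))]
  -- pull out the (n-l)! factor
  have hpull : (∑ γ : Equiv.Perm (Fin n), ∑ σ : Equiv.Perm (Fin n),
      (if (∀ i : Fin n, l ≤ (i : ℕ) → γ i = i) ∧ (∀ i : Fin n, l ≤ (i : ℕ) → σ i = i) ∧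
          γ * σ = θ then
        ((Equiv.Perm.sign γ : ℤ) : ℂ) *
          (((Finset.univ.filter (fun β : Fin l → lam.cells =>
            Pbeta lam box hln γ σ β ∧ Function.Injective β)).card : ℕ) : ℂ) *
          (((n - l).factorial : ℕ) : ℂ)
        else 0)) =
      (∑ γ : Equiv.Perm (Fin n), ∑ σ : Equiv.Perm (Fin n),
      (if (∀ i : Fin n, l ≤ (i : ℕ) → γ i = i) ∧ (∀ i : Fin n, l ≤ (i : ℕ) → σ i = i) ∧
          γ * σ = θ then
        ((Equiv.Perm.sign γ : ℤ) : ℂ) *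
          (((Finset.univ.filter (fun β : Fin l → lam.cells =>
            Pbeta lam box hln γ σ β ∧ Function.Injective β)).card : ℕ) : ℂ)
        else 0)) * (((n - l).factorial : ℕ) : ℂ) := by
    rw [Finset.sum_mul]
    apply Finset.sum_congr rfl
    intro γ _
    rw [Finset.sum_mul]
    apply Finset.sum_congr rfl
    intro σ _
    rw [ite_mul, zero_mul]
  rw [hpull, hH, ← hfact]
  ring
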